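/- Let p, a, b, c ∈ ℝ³ with a, b, c affinely independent. The quantity |(a − p) · ((b − p) × (c − p))| equals six times the volume (Lebesgue measure) of the tetrahedron with vertices p, a, b, c. -/

import Mathlib

open Matrix MeasureTheory

open scoped Pointwise

noncomputable section

namespace Stmt6Aux

def S : Set (Fin 3 → ℝ) := {x | (∀ i, 0 ≤ x i) ∧ x 0 + x 1 + x 2 ≤ 1}

def cube : Set (Fin 3 → ℝ) := Set.univ.pi fun _ => Set.Icc (0:ℝ) 1

def T (σ : Equiv.Perm (Fin 3)) : Set (Fin 3 → ℝ) := cube ∩ {y | Monotone (y ∘ σ)}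

def e (i : Fin 3) : Fin 3 → ℝ := Pi.single i 1

def A : Matrix (Fin 3) (Fin 3) ℝ := !![1,0,0;-1,1,0;0,-1,1]

lemma measurableSet_T (σ : Equiv.Perm (Fin 3)) : MeasurableSet (T σ) := by
  apply MeasurableSet.inter
  · exact MeasurableSet.univ_pi fun i => measurableSet_Icc
  · have : {y : Fin 3 → ℝ | Monotone (y ∘ σ)}
        = ⋂ (i) (j) (_ : i ≤ j), {y : Fin 3 → ℝ | y (σ i) ≤ y (σ j)} := by
      ext y
      simp [Monotone, Set.mem_iInter]
    rw [this]
    exact MeasurableSet.iInter fun i => MeasurableSet.iInter fun j =>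
      MeasurableSet.iInter fun _ => measurableSet_le (measurable_pi_apply _) (measurable_pi_apply _)

lemma volume_T (σ : Equiv.Perm (Fin 3)) : volume (T σ) = volume (T 1) := by
  have hmp := MeasureTheory.volume_measurePreserving_piCongrLeft (fun _ : Fin 3 => ℝ) σ.symm
  have hpre : T σ = (MeasurableEquiv.piCongrLeft (fun _ : Fin 3 => ℝ) σ.symm) ⁻¹' (T 1) := by
    ext y
    have hco : ∀ b, (MeasurableEquiv.piCongrLeft (fun _ : Fin 3 => ℝ) σ.symm) y b = y (σ b) := by
      intro b
      simp [MeasurableEquiv.coe_piCongrLeft, Equiv.piCongrLeft_apply, eq_rec_constant]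
    constructor
    · rintro ⟨hc, hm⟩
      refine ⟨fun i _ => ?_, ?_⟩
      · rw [hco]; exact hc (σ i) trivial
      · intro i j hij
        simp only [Function.comp, Equiv.Perm.coe_one, id_eq, hco]
        exact hm hij
    · rintro ⟨hc, hm⟩
      refine ⟨fun i _ => ?_, ?_⟩
      · have := hc (σ.symm i) trivial
        rw [hco] at this; simpa using this
      · intro i j hij
        have := hm hij
        simp only [Function.comp, Equiv.Perm.coe_one, id_eq, hco] at this
        exact this
  rw [hpre, hmp.measure_preimage (measurableSet_T 1).nullMeasurableSet]

lemma cube_subset_iUnion : cube ⊆ ⋃ σ : Equiv.Perm (Fin 3), T σ := by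
  intro y hy
  exact Set.mem_iUnion.2 ⟨Tuple.sort y, hy, Tuple.monotone_sort y⟩

lemma inter_subset_notinj {σ τ : Equiv.Perm (Fin 3)} (hst : σ ≠ τ) :
    T σ ∩ T τ ⊆ {y : Fin 3 → ℝ | ¬ Function.Injective y} := by
  rintro y ⟨⟨-, hσ⟩, ⟨-, hτ⟩⟩ hinj
  exact hst (Equiv.ext fun i => hinj (congrFun (Tuple.unique_monotone hσ hτ) i))

lemma volume_notinj : volume {y : Fin 3 → ℝ | ¬ Function.Injective y} = 0 := by
  have hsub : {y : Fin 3 → ℝ | ¬ Function.Injective y}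
      ⊆ ⋃ (i : Fin 3) (j : Fin 3) (_ : i ≠ j), {y : Fin 3 → ℝ | y i = y j} := by
    intro y hy
    simp only [Function.Injective, not_forall] at hy
    obtain ⟨i, j, hij, hne⟩ := hy
    exact Set.mem_iUnion.2 ⟨i, Set.mem_iUnion.2 ⟨j, Set.mem_iUnion.2 ⟨hne, hij⟩⟩⟩
  refine measure_mono_null hsub ?_
  refine measure_iUnion_null fun i => measure_iUnion_null fun j => measure_iUnion_null fun hij => ?_
  set f : (Fin 3 → ℝ) →ₗ[ℝ] ℝ := (LinearMap.proj i : (Fin 3 → ℝ) →ₗ[ℝ] ℝ) - LinearMap.proj j with hf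
  have hker : {y : Fin 3 → ℝ | y i = y j} = (LinearMap.ker f : Set (Fin 3 → ℝ)) := by
    ext y; simp [hf, sub_eq_zero]
  rw [hker]
  apply Measure.addHaar_submodule
  intro htop
  have h1 : Pi.single i (1:ℝ) ∈ LinearMap.ker f := htop ▸ Submodule.mem_top
  rw [LinearMap.mem_ker, hf] at h1
  simp [Pi.single_apply, hij.symm] at h1

lemma volume_T_one : volume (T 1) = 6⁻¹ := by
  have hmeas : ∀ σ, MeasurableSet (T σ) := measurableSet_T
  have hvolT : ∀ σ, volume (T σ) = volume (T 1) := volume_T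
  have hcube : cube = ⋃ σ : Equiv.Perm (Fin 3), T σ :=
    Set.Subset.antisymm cube_subset_iUnion (Set.iUnion_subset fun σ => Set.inter_subset_left)
  have hd : Pairwise (Function.onFun (AEDisjoint volume) T) := fun σ τ hst =>
    measure_mono_null (inter_subset_notinj hst) volume_notinj
  have h1 : volume cube = 1 := by
    rw [cube, volume_pi_pi]
    simp [Real.volume_Icc]
  rw [hcube, measure_iUnion₀ hd (fun σ => (hmeas σ).nullMeasurableSet)] at h1
  have h2 : ∑' σ : Equiv.Perm (Fin 3), volume (T σ) = 6 * volume (T 1) := by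
    rw [tsum_congr hvolT, tsum_fintype]
    simp [Finset.sum_const, Fintype.card_perm, nsmul_eq_mul]
    norm_num [Nat.factorial]
  rw [h2] at h1
  have h6 : (6 : ENNReal) ≠ 0 := by norm_num
  have h6' : (6 : ENNReal) ≠ ⊤ := by norm_num
  calc volume (T 1) = 6⁻¹ * (6 * volume (T 1)) := by
        rw [← mul_assoc, ENNReal.inv_mul_cancel h6 h6', one_mul]
    _ = 6⁻¹ := by rw [h1, mul_one]
lemma monotone_of (y : Fin 3 → ℝ) (h01 : y 0 ≤ y 1) (h12 : y 1 ≤ y 2) : Monotone y := by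
  intro i j hij
  fin_cases i <;> fin_cases j <;> simp_all <;> linarith

lemma S_eq_image : S = (Matrix.toLin' A) '' (T 1) := by
  have hmv : ∀ y : Fin 3 → ℝ, Matrix.toLin' A y = ![y 0, y 1 - y 0, y 2 - y 1] := by
    intro y
    funext i
    rw [Matrix.toLin'_apply]
    fin_cases i <;>
      simp [A, Matrix.mulVec, dotProduct, Fin.sum_univ_three] <;> ring
  ext x
  constructor
  · rintro ⟨hpos, hsum⟩
    refine ⟨![x 0, x 0 + x 1, x 0 + x 1 + x 2], ⟨?_, ?_⟩, ?_⟩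
    · intro i _
      have h0 := hpos 0; have h1 := hpos 1; have h2 := hpos 2
      fin_cases i <;> constructor <;> simp <;> linarith
    · simp only [Equiv.Perm.coe_one, Function.comp_id]
      have h1 := hpos 1; have h2 := hpos 2
      exact monotone_of _ (by simp; linarith) (by simp; linarith)
    · rw [hmv]
      funext i; fin_cases i <;> simp <;> ring
  · rintro ⟨y, ⟨hc, hm⟩, rfl⟩
    rw [hmv]
    simp only [Equiv.Perm.coe_one, Function.comp_id] at hm
    have h0 := (hc 0 trivial).1
    have h2 := (hc 2 trivial).2
    have h01 : y 0 ≤ y 1 := hm (by decide : (0:Fin 3) ≤ 1)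
    have h12 : y 1 ≤ y 2 := hm (by decide : (1:Fin 3) ≤ 2)
    refine ⟨fun i => ?_, ?_⟩
    · fin_cases i <;> simp <;> linarith
    · simp; linarith

lemma volume_S : volume S = 6⁻¹ := by
  rw [S_eq_image, Measure.addHaar_image_linearMap, volume_T_one]
  have : LinearMap.det (Matrix.toLin' A) = 1 := by
    rw [LinearMap.det_toLin']
    simp [A, Matrix.det_fin_three]
  rw [this]
  simp
lemma convex_S : Convex ℝ S := by
  rintro x ⟨hx1, hx2⟩ y ⟨hy1, hy2⟩ s t hs ht hst
  refine ⟨fun i => ?_, ?_⟩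
  · have : (s • x + t • y) i = s * x i + t * y i := rfl
    rw [this]
    have := mul_nonneg hs (hx1 i); have := mul_nonneg ht (hy1 i)
    linarith
  · have h : ∀ i, (s • x + t • y) i = s * x i + t * y i := fun _ => rfl
    rw [h 0, h 1, h 2]
    nlinarith [mul_nonneg hs (hx1 0)]

lemma hull_eq : convexHull ℝ {(0 : Fin 3 → ℝ), e 0, e 1, e 2} = S := by
  apply Set.Subset.antisymm
  · apply convexHull_min _ convex_S
    rintro x (rfl | rfl | rfl | rfl)
    · exact ⟨fun i => le_rfl, by norm_num⟩
    all_goals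
      refine ⟨fun i => ?_, ?_⟩
      · simp only [e, Pi.single_apply]
        split <;> norm_num
      · norm_num [e, Pi.single_apply, Fin.ext_iff]
  · rintro x ⟨hpos, hsum⟩
    have key := Finset.centerMass_mem_convexHull (Finset.univ : Finset (Fin 4))
      (s := ({0, e 0, e 1, e 2} : Set (Fin 3 → ℝ)))
      (w := ![1 - (x 0 + x 1 + x 2), x 0, x 1, x 2])
      (z := ![0, e 0, e 1, e 2])
      (fun i _ => by
        have h0 := hpos 0; have h1 := hpos 1; have h2 := hpos 2
        fin_cases i <;> simp <;> linarith)
      (by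
        have h0 := hpos 0
        simp [Fin.sum_univ_four]; linarith)
      (fun i _ => by fin_cases i <;> simp [Set.mem_insert_iff])
    have hsum1 : ∑ i : Fin 4, ![1 - (x 0 + x 1 + x 2), x 0, x 1, x 2] i = 1 := by
      simp [Fin.sum_univ_four]; ring
    rw [Finset.centerMass_eq_of_sum_1 _ _ hsum1] at key
    convert key using 1
    funext j
    simp only [Fin.sum_univ_four]
    fin_cases j <;>
      simp [e, Pi.single_apply, Matrix.cons_val_zero, Matrix.cons_val_one] <;> ring

end Stmt6Aux

open Stmt6Aux in
theorem stmt6 (p a b c : Fin 3 → ℝ) (h : AffineIndependent ℝ ![a, b, c]) :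
    |(a - p) ⬝ᵥ ((b - p) ⨯₃ (c - p))|
      = 6 * (volume (convexHull ℝ {p, a, b, c})).toReal := by
  set N : Matrix (Fin 3) (Fin 3) ℝ := Matrix.of ![a - p, b - p, c - p] with hN
  set M : (Fin 3 → ℝ) →ₗ[ℝ] (Fin 3 → ℝ) := Matrix.toLin' Nᵀ with hM
  have hMe : ∀ j : Fin 3, M (e j) = ![a - p, b - p, c - p] j := by
    intro j
    rw [hM, Matrix.toLin'_apply]
    funext i
    rw [show e j = Pi.single j (1:ℝ) from rfl, Matrix.mulVec_single]
    simp [hN, Matrix.transpose_apply]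
  have himg : (fun x => p + x) '' (M '' {(0 : Fin 3 → ℝ), e 0, e 1, e 2}) = {p, a, b, c} := by
    rw [Set.image_image]
    have h0 : p + M 0 = p := by rw [map_zero, add_zero]
    have h1 : p + M (e 0) = a := by rw [hMe]; simp
    have h2 : p + M (e 1) = b := by rw [hMe]; simp
    have h3 : p + M (e 2) = c := by rw [hMe]; simp
    simp [Set.image_insert_eq, h0, h1, h2, h3]
  have hCH : convexHull ℝ ({p, a, b, c} : Set (Fin 3 → ℝ))
      = (fun x => p + x) '' (M '' (convexHull ℝ {(0 : Fin 3 → ℝ), e 0, e 1, e 2})) := by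
    rw [M.image_convexHull]
    have h2 := ((AffineEquiv.constVAdd ℝ (Fin 3 → ℝ) p).toAffineMap).image_convexHull
      (M '' {(0 : Fin 3 → ℝ), e 0, e 1, e 2})
    calc convexHull ℝ ({p, a, b, c} : Set (Fin 3 → ℝ))
        = convexHull ℝ ((fun x => p + x) '' (M '' {(0 : Fin 3 → ℝ), e 0, e 1, e 2})) := by
          rw [himg]
      _ = (fun x => p + x) '' (convexHull ℝ (M '' {(0 : Fin 3 → ℝ), e 0, e 1, e 2})) := h2.symm
  have hdet : LinearMap.det M = (a - p) ⬝ᵥ ((b - p) ⨯₃ (c - p)) := by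
    rw [hM, LinearMap.det_toLin', Matrix.det_transpose, triple_product_eq_det]
    rfl
  have hvol : volume (convexHull ℝ ({p, a, b, c} : Set (Fin 3 → ℝ)))
      = ENNReal.ofReal |(a - p) ⬝ᵥ ((b - p) ⨯₃ (c - p))| * 6⁻¹ := by
    rw [hCH]
    rw [show (fun x => p + x) '' (M '' (convexHull ℝ {(0 : Fin 3 → ℝ), e 0, e 1, e 2}))
        = p +ᵥ (M '' (convexHull ℝ {(0 : Fin 3 → ℝ), e 0, e 1, e 2})) from rfl]
    rw [measure_vadd, Measure.addHaar_image_linearMap, hull_eq, volume_S, hdet]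
  rw [hvol]
  rw [ENNReal.toReal_mul, ENNReal.toReal_ofReal (abs_nonneg _)]
  simp [ENNReal.toReal_inv]
  ring
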